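/- If ξ is a nonnegative random variable on a probability space (Ω, P), 0 < β < 1, and E_β ξ := inf{ ∫_{Ω∖Ω₁} ξ dP : P(Ω₁) ≤ β }, then P{ ξ ≥ β⁻¹ E_β ξ } ≤ 2β (assuming E_β ξ > 0). -/

import Mathlib

open MeasureTheory

/-- If `ξ` is a nonnegative integrable random variable on a probability space `(Ω, P)`,
`0 < β < 1`, and `E_β ξ := inf{ ∫_{Ω∖Ω₁} ξ dP : P(Ω₁) ≤ β }` is positive, then
`P{ ξ ≥ β⁻¹ E_β ξ } ≤ 2β`. -/
theorem truncated_expectation_chebyshev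
    {Ω : Type*} [MeasurableSpace Ω] (P : Measure Ω) [IsProbabilityMeasure P]
    (ξ : Ω → ℝ) (hξmeas : Measurable ξ) (hξnonneg : ∀ ω, 0 ≤ ξ ω)
    (hξint : Integrable ξ P)
    (β : ℝ) (hβ0 : 0 < β) (hβ1 : β < 1)
    (Eβ : ℝ)
    (hEβ : Eβ = sInf {I : ℝ | ∃ Ω₁ : Set Ω, MeasurableSet Ω₁ ∧
      P Ω₁ ≤ ENNReal.ofReal β ∧ I = ∫ ω in Ω₁ᶜ, ξ ω ∂P})
    (hEβpos : 0 < Eβ) :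
    P {ω | β⁻¹ * Eβ ≤ ξ ω} ≤ ENNReal.ofReal (2 * β) := by
  by_contra hcon
  push_neg at hcon
  set A := {ω | β⁻¹ * Eβ ≤ ξ ω} with hA
  have hAmeas : MeasurableSet A := measurableSet_le measurable_const hξmeas
  have hPA : P A ≠ ⊤ := measure_ne_top P A
  set a := (P A).toReal with ha
  have h2βa : 2 * β < a :=
    (ENNReal.ofReal_lt_iff_lt_toReal (by positivity) hPA).mp hcon
  set S := {I : ℝ | ∃ Ω₁ : Set Ω, MeasurableSet Ω₁ ∧
      P Ω₁ ≤ ENNReal.ofReal β ∧ I = ∫ ω in Ω₁ᶜ, ξ ω ∂P} with hS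
  have hSne : S.Nonempty :=
    ⟨∫ ω in (∅ : Set Ω)ᶜ, ξ ω ∂P, ∅, MeasurableSet.empty, by simp, rfl⟩
  have hSbdd : BddBelow S := by
    refine ⟨0, fun I hI => ?_⟩
    obtain ⟨Ω₁, -, -, rfl⟩ := hI
    exact integral_nonneg fun ω => hξnonneg ω
  set ε := β⁻¹ * Eβ * (a - 2 * β) with hε
  have hεpos : 0 < ε := by
    have : 0 < a - 2 * β := by linarith
    positivity
  have hlt : sInf S < Eβ + ε := by rw [← hEβ]; linarith
  obtain ⟨I, hIS, hI⟩ := (csInf_lt_iff hSbdd hSne).mp hlt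
  obtain ⟨Ω₁, hΩ₁meas, hΩ₁P, rfl⟩ := hIS
  -- the set B = Ω₁ᶜ ∩ A
  set B := Ω₁ᶜ ∩ A with hB
  have hBmeas : MeasurableSet B := hΩ₁meas.compl.inter hAmeas
  have hPΩ₁ : (P Ω₁).toReal ≤ β := ENNReal.toReal_le_of_le_ofReal hβ0.le hΩ₁P
  have hPBge : a - β ≤ (P B).toReal := by
    have hsub : A ⊆ Ω₁ ∪ B := by
      intro ω hω
      by_cases h : ω ∈ Ω₁
      · exact Or.inl h
      · exact Or.inr ⟨h, hω⟩
    have h1 : P A ≤ P Ω₁ + P B := le_trans (measure_mono hsub) (measure_union_le _ _)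
    have h2 : (P A).toReal ≤ (P Ω₁).toReal + (P B).toReal := by
      rw [← ENNReal.toReal_add (measure_ne_top P _) (measure_ne_top P _)]
      exact ENNReal.toReal_mono (by finiteness) h1
    linarith
  have hc : β⁻¹ * Eβ * (P B).toReal ≤ ∫ ω in B, ξ ω ∂P :=
    setIntegral_ge_of_const_le_real hBmeas (measure_ne_top P B)
      (fun ω hω => hω.2) (hξint.integrableOn)
  have hmono : (∫ ω in B, ξ ω ∂P) ≤ ∫ ω in Ω₁ᶜ, ξ ω ∂P := by
    refine setIntegral_mono_set hξint.integrableOn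
      (Filter.Eventually.of_forall fun ω => hξnonneg ω)
      (HasSubset.Subset.eventuallyLE Set.inter_subset_left)
  have hcle : β⁻¹ * Eβ * (a - β) ≤ β⁻¹ * Eβ * (P B).toReal := by
    apply mul_le_mul_of_nonneg_left hPBge
    positivity
  have hβinv : β⁻¹ * β = 1 := inv_mul_cancel₀ hβ0.ne'
  have : Eβ + ε ≤ ∫ ω in Ω₁ᶜ, ξ ω ∂P := by
    have : Eβ + ε = β⁻¹ * Eβ * (a - β) := by rw [hε]; ring_nf; nlinarith [hβinv]
    linarith
  linarith
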